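/- Let G be a group and S ⊆ G a nonempty subset such that the Cayley poset P(G,S) is a Cayley representation of G. Then the Cayley digraph of G with connection set S is a digraphical regular representation of G: every bijection φ : G → G satisfying, for all g, h ∈ G, g⁻¹h ∈ S if and only if φ(g)⁻¹φ(h) ∈ S, is left multiplication by some element of G. -/

import Mathlib

variable {G : Type*}

/-- The order relation of the Cayley poset `P(G,S)`: the underlying set is the disjoint
union of two copies of `G` (`Sum.inl g` is written `g`, `Sum.inr h` is written `h'`),
with `g < h'` iff `g⁻¹ * h ∈ S`, and no other distinct elements comparable. -/
def cayleyLE [Group G] (S : Set G) : G ⊕ G → G ⊕ G → Prop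
  | Sum.inl g, Sum.inl h => g = h
  | Sum.inl g, Sum.inr h => g⁻¹ * h ∈ S
  | Sum.inr _, Sum.inl _ => False
  | Sum.inr g, Sum.inr h => g = h

/-- The Cayley poset `P(G,S)` as a type synonym for `G ⊕ G`. -/
def CayleyPoset (G : Type*) [Group G] (S : Set G) : Type _ := G ⊕ G

instance [Group G] (S : Set G) : PartialOrder (CayleyPoset G S) where
  le x y := cayleyLE S x y
  le_refl x := by cases x <;> exact rfl
  le_trans x y z hxy hyz := by
    cases x <;> cases y <;> cases z <;> simp_all [cayleyLE]
  le_antisymm x y hxy hyx := by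
    cases x <;> cases y <;> simp_all [cayleyLE] <;> subst_vars <;> rfl

/-- The map `L(g)` on `P(G,S)`: `h ↦ g*h` on minimal points and `h' ↦ (g*h)'` on
maximal points. -/
def cayleyL [Group G] (g : G) : G ⊕ G → G ⊕ G
  | Sum.inl h => Sum.inl (g * h)
  | Sum.inr h => Sum.inr (g * h)

/-- `P(G,S)` is a Cayley representation of `G` if every order automorphism of the
Cayley poset `P(G,S)` equals `L(g)` for some `g ∈ G`. -/
def IsCayleyRep (G : Type*) [Group G] (S : Set G) : Prop :=
  ∀ φ : CayleyPoset G S ≃o CayleyPoset G S,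
    ∃ g : G, ∀ p : CayleyPoset G S, φ p = cayleyL g p

/-- If `P(G,S)` is a Cayley representation of `G`, then the Cayley
digraph of `G` with connection set `S` is a digraphical regular representation: every
bijection `φ : G → G` with `g⁻¹*h ∈ S ↔ (φ g)⁻¹ * φ h ∈ S` for all `g, h` is left
multiplication by some element of `G`. -/
theorem cayley_digraph_DRR_of_cayleyRep (G : Type*) [Group G] (S : Set G)
    (hne : S.Nonempty) (hrep : IsCayleyRep G S)
    (φ : G ≃ G) (hφ : ∀ g h : G, g⁻¹ * h ∈ S ↔ (φ g)⁻¹ * φ h ∈ S) :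
    ∃ a : G, ∀ g : G, φ g = a * g := by
  let ψ : CayleyPoset G S ≃o CayleyPoset G S :=
    { toFun := Sum.map φ φ
      invFun := Sum.map φ.symm φ.symm
      left_inv := by rintro (g | g) <;> simp <;> rfl
      right_inv := by rintro (g | g) <;> simp <;> rfl
      map_rel_iff' := by
        rintro (g | g) (h | h) <;>
          erw [Equiv.coe_fn_mk, Equiv.coe_fn_mk] <;>
          show cayleyLE S _ _ ↔ cayleyLE S _ _ <;>
          simp [cayleyLE, (hφ g h).symm, φ.injective.eq_iff] }
  obtain ⟨a, ha⟩ := hrep ψ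
  refine ⟨a, fun g => ?_⟩
  have := ha (Sum.inl g)
  rw [show ψ (Sum.inl g) = Sum.inl (φ g) from rfl] at this
  exact Sum.inl.inj this
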